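/- arXiv:math/0409090 — 4 statements merged into one kernel-verified Lean document; each statement's English description precedes it below -/
import Mathlib

section
/- For positive integers r, s and 0 ≤ i ≤ r-1, the sum over l_1 from i+1 to r, l_2 from l_1 to r, ..., l_i from l_{i-1} to r, of the number of tuples (a_1,...,a_r) of nonnegative integers with a_1+...+a_r = s+i and at least l_i of the a_j nonzero, equals C(r+s-1, s+i)·C(s+i-1, i). (For i = 0 the nested sum is interpreted as the single count of tuples summing to s with at least 1 nonzero entry.) -/
open Finset

lemma myNatCardSigma {α : Type*} [Fintype α] {β : α → Type*} [∀ a, Finite (β a)] :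
    Nat.card (Σ a, β a) = ∑ a, Nat.card (β a) := by
  letI : ∀ a, Fintype (β a) := fun a => Fintype.ofFinite _
  rw [Nat.card_eq_fintype_card, Fintype.card_sigma]
  exact Finset.sum_congr rfl fun a _ => (Nat.card_eq_fintype_card).symm

lemma myCardPiAntidiag (k n : ℕ) :
    (piAntidiag (univ : Finset (Fin k)) n).card = (k + n - 1).choose n := by
  classical
  rw [← map_sym_eq_piAntidiag, Finset.card_map, Finset.sym_univ, Finset.card_univ,
    Sym.card_sym_eq_choose, Fintype.card_fin]

lemma myMonoLe {n K : ℕ} {f g : Fin n → Fin K} (hf : Monotone f) (hg : Monotone g)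
    (hm : Multiset.map f Finset.univ.val = Multiset.map g Finset.univ.val) (j : Fin n) :
    f j ≤ g j := by
  classical
  have hcount : ∀ x : Fin K,
      Fintype.card {i // f i ≤ x} = Fintype.card {i // g i ≤ x} := by
    intro x
    have h := congrArg (Multiset.countP (· ≤ x)) hm
    rw [Multiset.countP_map, Multiset.countP_map] at h
    rw [Fintype.card_subtype, Fintype.card_subtype]
    simpa [Finset.card, Finset.filter] using h
  have h2 := (Tuple.lt_card_le_iff_apply_le_of_monotone (f := g) (a := g j) (j := j) hg).mpr le_rfl
  rw [← Fintype.card_subtype, ← hcount, Fintype.card_subtype] at h2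
  exact (Tuple.lt_card_le_iff_apply_le_of_monotone (f := f) (a := g j) (j := j) hf).mp h2

lemma myCardMonoTuples (n K : ℕ) :
    Nat.card {l : Fin n → Fin K // Monotone l} = (K + n - 1).choose n := by
  classical
  have hb : Function.Bijective
      (fun l : {l : Fin n → Fin K // Monotone l} =>
        (⟨Multiset.map l.1 Finset.univ.val, by simp⟩ : Sym (Fin K) n)) := by
    constructor
    · rintro ⟨f, hf⟩ ⟨g, hg⟩ h
      have hm : Multiset.map f Finset.univ.val = Multiset.map g Finset.univ.val :=
        congrArg Subtype.val h
      exact Subtype.ext (funext fun j => le_antisymm (myMonoLe hf hg hm j)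
        (myMonoLe hg hf hm.symm j))
    · rintro ⟨m, hm⟩
      have hL : m.toList.length = n := by rw [Multiset.length_toList]; exact hm
      subst hL
      set L := m.toList with hLdef
      let g : Fin L.length → Fin K := L.get
      refine ⟨⟨g ∘ Tuple.sort g, Tuple.monotone_sort g⟩, Subtype.ext ?_⟩
      show Multiset.map (g ∘ Tuple.sort g) Finset.univ.val = m
      have h1 : Multiset.map (⇑(Tuple.sort g)) Finset.univ.val = Finset.univ.val := by
        have := congrArg Finset.val (Finset.map_univ_equiv (Tuple.sort g))
        simpa [Finset.map_val] using this
      calc Multiset.map (g ∘ Tuple.sort g) Finset.univ.val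
          = Multiset.map g (Multiset.map (⇑(Tuple.sort g)) Finset.univ.val) := by
            rw [Multiset.map_map]
        _ = Multiset.map g Finset.univ.val := by rw [h1]
        _ = m := by
            rw [Fin.univ_val_map]
            show ↑(List.ofFn L.get) = m
            rw [List.ofFn_get, hLdef, Multiset.coe_toList]
  rw [Nat.card_eq_of_bijective _ hb]
  show Nat.card (Sym (Fin K) n) = _
  rw [Nat.card_eq_fintype_card, Sym.card_sym_eq_choose, Fintype.card_fin]


def myFibEquiv (i c : ℕ) : {l : Fin i → ℕ // Monotone l ∧ ∀ j, i+1 ≤ l j ∧ l j ≤ c} ≃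
    {l : Fin i → Fin (c - i) // Monotone l} where
  toFun l := ⟨fun j => ⟨l.1 j - (i+1), by have h := l.2.2 j; omega⟩, by
    intro a b hab
    simp only [Fin.mk_le_mk]
    exact Nat.sub_le_sub_right (l.2.1 hab) _⟩
  invFun g := ⟨fun j => i + 1 + (g.1 j : ℕ), by
    refine ⟨fun a b hab => ?_, fun j => ?_⟩
    · have := g.2 hab
      rw [Fin.le_def] at this
      show i + 1 + (g.1 a : ℕ) ≤ i + 1 + (g.1 b : ℕ)
      omega
    · have := (g.1 j).isLt
      show i + 1 ≤ i + 1 + (g.1 j : ℕ) ∧ i + 1 + (g.1 j : ℕ) ≤ c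
      omega⟩
  left_inv l := Subtype.ext (funext fun j => by
    have := l.2.2 j
    simp only
    omega)
  right_inv g := Subtype.ext (funext fun j => Fin.ext (by simp))

lemma myCardFib (i c : ℕ) :
    Nat.card {l : Fin i → ℕ // Monotone l ∧ ∀ j, i+1 ≤ l j ∧ l j ≤ c}
      = (c - 1).choose i := by
  rw [Nat.card_congr (myFibEquiv i c), myCardMonoTuples]
  rcases le_or_gt i c with h | h
  · congr 1
    omega
  · rw [Nat.choose_eq_zero_of_lt (by omega), Nat.choose_eq_zero_of_lt (by omega)]

instance (i c : ℕ) : Finite {l : Fin i → ℕ // Monotone l ∧ ∀ j, i+1 ≤ l j ∧ l j ≤ c} :=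
  Finite.of_equiv _ (myFibEquiv i c).symm

lemma mySumOrderEmb {γ : Type*} [LinearOrder γ] (T : Finset γ) {t : ℕ} (hT : T.card = t)
    (g : γ → ℕ) : ∑ j : Fin t, g (T.orderEmbOfFin hT j) = ∑ x ∈ T, g x := by
  rw [← Finset.sum_attach T g]
  have h := Equiv.sum_comp (T.orderIsoOfFin hT).toEquiv (fun x : T => g x.1)
  simpa [Finset.coe_orderIsoOfFin_apply] using h

lemma myOrderEmbCongr {γ : Type*} [LinearOrder γ] {S T : Finset γ} (h : S = T) {t : ℕ}
    (hS : S.card = t) (hT : T.card = t) (j : Fin t) :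
    S.orderEmbOfFin hS j = T.orderEmbOfFin hT j := by subst h; rfl

lemma myCardFiber (r N u : ℕ) (hu : 1 ≤ u) (huN : u ≤ N) :
    ((piAntidiag (univ : Finset (Fin r)) N).filter
        (fun a => (univ.filter fun j => a j ≠ 0).card = u)).card
      = r.choose u * (N - 1).choose (u - 1) := by
  classical
  have key : ((piAntidiag (univ : Finset (Fin r)) N).filter
        (fun a => (univ.filter fun j => a j ≠ 0).card = u)).card
      = ((univ.powersetCard u : Finset (Finset (Fin r))) ×ˢ
          piAntidiag (univ : Finset (Fin u)) (N - u)).card := by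
    refine Finset.card_bij'
      (fun a ha => (univ.filter (fun j => a j ≠ 0),
        fun j => a ((univ.filter (fun j => a j ≠ 0)).orderEmbOfFin
          (Finset.mem_filter.mp ha).2 j) - 1))
      (fun p hp => fun x => if hx : x ∈ p.1 then
        p.2 ((p.1.orderIsoOfFin
          (Finset.mem_powersetCard.mp (Finset.mem_product.mp hp).1).2).symm ⟨x, hx⟩) + 1
        else 0)
      ?_ ?_ ?_ ?_
    · -- hi
      intro a ha
      obtain ⟨hmem, hcard⟩ := Finset.mem_filter.mp ha
      have hsum : ∑ j, a j = N := (Finset.mem_piAntidiag.mp hmem).1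
      set T := univ.filter (fun j => a j ≠ 0) with hTdef
      rw [Finset.mem_product]
      constructor
      · exact Finset.mem_powersetCard.mpr ⟨Finset.subset_univ _, hcard⟩
      · rw [Finset.mem_piAntidiag]
        refine ⟨?_, fun _ _ => Finset.mem_univ _⟩
        have hone : ∀ j : Fin u, 1 ≤ a (T.orderEmbOfFin hcard j) := fun j =>
          Nat.one_le_iff_ne_zero.mpr
            (Finset.mem_filter.mp (T.orderEmbOfFin_mem hcard j)).2
        have h3 : ∑ j : Fin u, a (T.orderEmbOfFin hcard j) = N := by
          rw [mySumOrderEmb T hcard a]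
          rw [show ∑ x ∈ T, a x = ∑ x, a x from Finset.sum_filter_ne_zero univ]
          exact hsum
        have h2 : ∑ j : Fin u, (a (T.orderEmbOfFin hcard j) - 1) + ∑ _j : Fin u, (1:ℕ)
            = ∑ j : Fin u, a (T.orderEmbOfFin hcard j) := by
          rw [← Finset.sum_add_distrib]
          exact Finset.sum_congr rfl fun j _ => by have := hone j; omega
        simp only [Finset.sum_const, smul_eq_mul, mul_one, Finset.card_univ,
          Fintype.card_fin] at h2
        rw [h3] at h2
        exact Nat.eq_sub_of_add_eq h2
    · -- hj
      intro p hp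
      obtain ⟨hp1, hp2⟩ := Finset.mem_product.mp hp
      have hT : p.1.card = u := (Finset.mem_powersetCard.mp hp1).2
      have hb : ∑ j, p.2 j = N - u := (Finset.mem_piAntidiag.mp hp2).1
      set σ := (p.1.orderIsoOfFin (Finset.mem_powersetCard.mp (Finset.mem_product.mp hp).1).2)
      set a' : Fin r → ℕ := fun x => if hx : x ∈ p.1 then p.2 (σ.symm ⟨x, hx⟩) + 1 else 0
        with ha'def
      have hsupp : univ.filter (fun j => a' j ≠ 0) = p.1 := by
        ext x
        simp only [Finset.mem_filter, Finset.mem_univ, true_and, ha'def]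
        by_cases hx : x ∈ p.1 <;> simp [hx]
      have hsum' : ∑ x, a' x = N := by
        rw [← Finset.sum_subset (Finset.subset_univ p.1)
          (fun x _ hx => by simp [ha'def, hx])]
        rw [← Finset.sum_attach p.1 a']
        have : ∀ x : p.1, a' x.1 = p.2 (σ.symm x) + 1 := by
          intro x; simp [ha'def, x.2]
        rw [Finset.sum_congr rfl fun x _ => this x]
        rw [Finset.sum_add_distrib]
        have he : ∑ x ∈ p.1.attach, p.2 (σ.symm x) = ∑ j, p.2 j := by
          rw [← Finset.univ_eq_attach]
          exact Equiv.sum_comp σ.toEquiv.symm p.2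
        rw [he]
        simp only [Finset.sum_const, smul_eq_mul, mul_one]
        rw [Finset.card_attach, hT, hb]
        omega
      rw [Finset.mem_filter, Finset.mem_piAntidiag]
      exact ⟨⟨hsum', fun _ _ => Finset.mem_univ _⟩, by rw [hsupp, hT]⟩
    · -- left_inv
      intro a ha
      dsimp only
      funext x
      obtain ⟨hmem, hcard⟩ := Finset.mem_filter.mp ha
      by_cases hx : x ∈ univ.filter (fun j => a j ≠ 0)
      · rw [dif_pos hx]
        have hax : a x ≠ 0 := (Finset.mem_filter.mp hx).2
        have hemb : ∀ y : (univ.filter (fun j => a j ≠ 0) : Finset (Fin r)),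
            (univ.filter (fun j => a j ≠ 0)).orderEmbOfFin hcard
              (((univ.filter (fun j => a j ≠ 0)).orderIsoOfFin hcard).symm y) = y := by
          intro y
          rw [← Finset.coe_orderIsoOfFin_apply, OrderIso.apply_symm_apply]
        rw [hemb ⟨x, hx⟩]
        show a x - 1 + 1 = a x
        exact Nat.sub_add_cancel (Nat.one_le_iff_ne_zero.mpr hax)
      · rw [dif_neg hx]
        have : a x = 0 := by
          by_contra h
          exact hx (Finset.mem_filter.mpr ⟨Finset.mem_univ _, h⟩)
        omega
    · -- right_inv
      intro p hp
      obtain ⟨hp1, hp2⟩ := Finset.mem_product.mp hp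
      have hT : p.1.card = u := (Finset.mem_powersetCard.mp hp1).2
      set σ := (p.1.orderIsoOfFin (Finset.mem_powersetCard.mp (Finset.mem_product.mp hp).1).2)
      set a' : Fin r → ℕ := fun x => if hx : x ∈ p.1 then p.2 (σ.symm ⟨x, hx⟩) + 1 else 0
        with ha'def
      have hsupp : univ.filter (fun j => a' j ≠ 0) = p.1 := by
        ext x
        simp only [Finset.mem_filter, Finset.mem_univ, true_and, ha'def]
        by_cases hx : x ∈ p.1 <;> simp [hx]
      have hcard' : (univ.filter (fun j => a' j ≠ 0)).card = u := by rw [hsupp, hT]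
      refine Prod.ext hsupp (funext fun j => ?_)
      have hembeq : (univ.filter (fun j => a' j ≠ 0)).orderEmbOfFin hcard' j
          = p.1.orderEmbOfFin hT j := myOrderEmbCongr hsupp _ _ j
      show a' ((univ.filter (fun j => a' j ≠ 0)).orderEmbOfFin hcard' j) - 1 = p.2 j
      rw [hembeq]
      have hmem : p.1.orderEmbOfFin hT j ∈ p.1 := p.1.orderEmbOfFin_mem hT j
      rw [show a' (p.1.orderEmbOfFin hT j) = p.2 (σ.symm ⟨p.1.orderEmbOfFin hT j, hmem⟩) + 1
        from dif_pos hmem]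
      have : σ.symm ⟨p.1.orderEmbOfFin hT j, hmem⟩ = j := by
        have : (⟨p.1.orderEmbOfFin hT j, hmem⟩ : p.1) = σ j := by
          refine Subtype.ext ?_
          rw [Finset.coe_orderIsoOfFin_apply]
        rw [this, OrderIso.symm_apply_apply]
      rw [this]
      omega
  rw [key]
  clear key
  rw [Finset.card_product, Finset.card_powersetCard, Finset.card_univ, Fintype.card_fin,
    myCardPiAntidiag]
  have h1 : u + (N - u) - 1 = N - 1 := by omega
  have h2 : N - u = (N - 1) - (u - 1) := by omega
  rw [h1, h2, Nat.choose_symm (by omega)]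

def suppCard (r : ℕ) (a : Fin r → ℕ) : ℕ := (Finset.univ.filter fun j => a j ≠ 0).card

lemma mySuppPos {r N : ℕ} (hN : 1 ≤ N) (a : Fin r → ℕ) (ha : ∑ j, a j = N) :
    1 ≤ suppCard r a := by
  refine Finset.card_pos.mpr (Finset.filter_nonempty_iff.mpr ?_)
  by_contra h
  push_neg at h
  have : ∑ j, a j = 0 := Finset.sum_eq_zero fun j _ => h j (Finset.mem_univ j)
  omega

lemma mySuppLeR {r : ℕ} (a : Fin r → ℕ) : suppCard r a ≤ r := by
  calc suppCard r a ≤ (univ : Finset (Fin r)).card := Finset.card_filter_le _ _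
    _ = r := by simp

lemma mySuppLeN {r N : ℕ} (a : Fin r → ℕ) (ha : ∑ j, a j = N) : suppCard r a ≤ N := by
  have h1 : ∀ x ∈ univ.filter (fun j => a j ≠ 0), 1 ≤ a x := fun x hx =>
    Nat.one_le_iff_ne_zero.mpr (Finset.mem_filter.mp hx).2
  calc suppCard r a = ∑ _x ∈ univ.filter (fun j => a j ≠ 0), 1 := by
        rw [suppCard, Finset.card_eq_sum_ones]
    _ ≤ ∑ x ∈ univ.filter (fun j => a j ≠ 0), a x := Finset.sum_le_sum h1
    _ = ∑ x, a x := Finset.sum_filter_ne_zero univ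
    _ = N := ha

lemma myCondIff (r s i : ℕ) (hs : 1 ≤ s) (hir : i + 1 ≤ r) (a : Fin r → ℕ)
    (ha : ∑ j, a j = s + i) (l : Fin i → ℕ) :
    (Monotone l ∧ (∀ j, i + 1 ≤ l j ∧ l j ≤ r) ∧
      (if h : 0 < i then l ⟨i - 1, by omega⟩ else 1) ≤ suppCard r a)
    ↔ (Monotone l ∧ ∀ j, i + 1 ≤ l j ∧ l j ≤ suppCard r a) := by
  have h1 : 1 ≤ suppCard r a := mySuppPos (by omega) a ha
  have h2 : suppCard r a ≤ r := mySuppLeR a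
  constructor
  · rintro ⟨hm, hb, hlast⟩
    refine ⟨hm, fun j => ⟨(hb j).1, ?_⟩⟩
    have h0 : 0 < i := j.pos
    rw [dif_pos h0] at hlast
    have hj : l j ≤ l ⟨i - 1, by omega⟩ := by
      apply hm
      rw [Fin.le_def]
      have := j.isLt
      simp only
      omega
    omega
  · rintro ⟨hm, hb⟩
    refine ⟨hm, fun j => ⟨(hb j).1, le_trans (hb j).2 h2⟩, ?_⟩
    by_cases h0 : 0 < i
    · rw [dif_pos h0]
      exact (hb ⟨i - 1, by omega⟩).2
    · rw [dif_neg h0]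
      exact h1

lemma myChooseMul (s i v : ℕ) (hs : 1 ≤ s) :
    (s + i - 1).choose (i + v) * (i + v).choose i
      = (s + i - 1).choose i * (s - 1).choose v := by
  rcases le_or_gt (i + v) (s + i - 1) with h | h
  · rw [Nat.choose_mul (n := s + i - 1) (Nat.le_add_right i v),
      show s + i - 1 - i = s - 1 by omega, show i + v - i = v by omega]
  · rw [Nat.choose_eq_zero_of_lt h, Nat.choose_eq_zero_of_lt (show s - 1 < v by omega),
      zero_mul, mul_zero]

lemma myVandermonde (r s i : ℕ) (hr : 1 ≤ r) (hs : 1 ≤ s) (hi : i ≤ r - 1) :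
    ∑ v ∈ range (r - i), r.choose (i + 1 + v) * (s - 1).choose v
      = (r + s - 1).choose (s + i) := by
  have hn : 1 ≤ r - i := by omega
  have hstep : ∀ v ∈ range (r - i), r.choose (i + 1 + v) * (s - 1).choose v
      = r.choose (r - i - 1 - v) * (s - 1).choose (r - i - 1 - (r - i - 1 - v)) := by
    intro v hv
    rw [Finset.mem_range] at hv
    congr 1
    · rw [show r - i - 1 - v = r - (i + 1 + v) by omega]
      exact (Nat.choose_symm (by omega)).symm
    · congr 1
      omega
  rw [Finset.sum_congr rfl hstep]
  have hrefl := Finset.sum_range_reflect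
    (fun j => r.choose j * (s - 1).choose (r - i - 1 - j)) (r - i)
  rw [hrefl]
  have hv := Nat.add_choose_eq r (s - 1) (r - i - 1)
  rw [Finset.Nat.sum_antidiagonal_eq_sum_range_succ_mk] at hv
  simp only [Nat.succ_eq_add_one, show r - i - 1 + 1 = r - i by omega] at hv
  rw [← hv]
  rw [show r + (s - 1) = r + s - 1 by omega]
  rw [show r - i - 1 = (r + s - 1) - (s + i) by omega]
  exact Nat.choose_symm (by omega)

theorem stmt3 (r s i : ℕ) (hr : 1 ≤ r) (hs : 1 ≤ s) (hi : i ≤ r - 1) :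
    Nat.card {p : (Fin i → ℕ) × (Fin r → ℕ) //
      Monotone p.1 ∧ (∀ j, i + 1 ≤ p.1 j ∧ p.1 j ≤ r) ∧
      (∑ j, p.2 j) = s + i ∧
      (if h : 0 < i then p.1 ⟨i - 1, by omega⟩ else 1) ≤
        (Finset.univ.filter fun j => p.2 j ≠ 0).card }
    = (r + s - 1).choose (s + i) * (s + i - 1).choose i := by
  classical
  have hir : i + 1 ≤ r := by omega
  set N := s + i with hNdef
  have hN : 1 ≤ N := by omega
  set P : Finset (Fin r → ℕ) := piAntidiag univ N with hP
  have hiff : ∀ p : (Fin i → ℕ) × (Fin r → ℕ),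
      (Monotone p.1 ∧ (∀ j, i + 1 ≤ p.1 j ∧ p.1 j ≤ r) ∧
        (∑ j, p.2 j) = s + i ∧
        (if h : 0 < i then p.1 ⟨i - 1, by omega⟩ else 1) ≤
          (Finset.univ.filter fun j => p.2 j ≠ 0).card) ↔
      ((∑ j, p.2 j) = N ∧ (Monotone p.1 ∧ ∀ j, i + 1 ≤ p.1 j ∧ p.1 j ≤ suppCard r p.2)) := by
    intro p
    constructor
    · rintro ⟨h1, h2, h3, h4⟩
      exact ⟨h3, (myCondIff r s i hs hir p.2 h3 p.1).mp ⟨h1, h2, h4⟩⟩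
    · rintro ⟨h3, h⟩
      obtain ⟨h1, h2, h4⟩ := (myCondIff r s i hs hir p.2 h3 p.1).mpr h
      exact ⟨h1, h2, h3, h4⟩
  rw [Nat.card_congr (Equiv.subtypeEquivRight hiff)]
  have E2 : {p : (Fin i → ℕ) × (Fin r → ℕ) //
      (∑ j, p.2 j) = N ∧ (Monotone p.1 ∧ ∀ j, i + 1 ≤ p.1 j ∧ p.1 j ≤ suppCard r p.2)} ≃
      Σ a : {a // a ∈ P}, {l : Fin i → ℕ //
        Monotone l ∧ ∀ j, i + 1 ≤ l j ∧ l j ≤ suppCard r a.1} :=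
    ⟨fun p => ⟨⟨p.1.2, Finset.mem_piAntidiag.mpr ⟨p.2.1, fun _ _ => Finset.mem_univ _⟩⟩,
        ⟨p.1.1, p.2.2⟩⟩,
     fun q => ⟨(q.2.1, q.1.1), ⟨(Finset.mem_piAntidiag.mp q.1.2).1, q.2.2⟩⟩,
     fun p => rfl, fun q => rfl⟩
  rw [Nat.card_congr E2, myNatCardSigma]
  have hfib : ∀ a : {a // a ∈ P}, Nat.card {l : Fin i → ℕ //
      Monotone l ∧ ∀ j, i + 1 ≤ l j ∧ l j ≤ suppCard r a.1}
      = (suppCard r a.1 - 1).choose i := fun a => myCardFib i (suppCard r a.1)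
  rw [Finset.sum_congr rfl (fun a _ => hfib a)]
  rw [Finset.sum_coe_sort P (fun a => (suppCard r a - 1).choose i)]
  have hmaps : ∀ a ∈ P, suppCard r a ∈ range (r + 1) := fun a _ =>
    Finset.mem_range.mpr (by have := mySuppLeR a; omega)
  rw [← Finset.sum_fiberwise_of_maps_to hmaps (fun a => (suppCard r a - 1).choose i)]
  have hinner : ∀ u ∈ range (r + 1),
      ∑ a ∈ P.filter (fun a => suppCard r a = u), (suppCard r a - 1).choose i
        = (P.filter (fun a => suppCard r a = u)).card * (u - 1).choose i := by
    intro u _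
    rw [Finset.sum_congr rfl (fun a ha => by rw [(Finset.mem_filter.mp ha).2]),
      Finset.sum_const, smul_eq_mul]
  rw [Finset.sum_congr rfl hinner, Finset.sum_range_succ']
  have hzero : P.filter (fun a => suppCard r a = 0) = ∅ := by
    rw [Finset.filter_eq_empty_iff]
    intro a ha
    have h1 : ∑ j, a j = N := by
      have := Finset.mem_piAntidiag.mp (hP ▸ ha)
      exact this.1
    have := mySuppPos hN a h1
    omega
  rw [hzero]
  simp only [Finset.card_empty, zero_mul, add_zero]
  have hcardfib : ∀ u, (P.filter (fun a => suppCard r a = u + 1)).card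
      = r.choose (u + 1) * (N - 1).choose u := by
    intro u
    rcases le_or_gt (u + 1) N with h | h
    · exact myCardFiber r N (u + 1) (by omega) h
    · have hemp : P.filter (fun a => suppCard r a = u + 1) = ∅ := by
        rw [Finset.filter_eq_empty_iff]
        intro a ha
        have h1 : ∑ j, a j = N := (Finset.mem_piAntidiag.mp (hP ▸ ha)).1
        have := mySuppLeN a h1
        omega
      rw [hemp, Nat.choose_eq_zero_of_lt (show N - 1 < u by omega), mul_zero,
        Finset.card_empty]
  rw [Finset.sum_congr rfl (fun u _ => by rw [hcardfib u])]
  simp only [Nat.add_sub_cancel]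
  rw [Finset.range_eq_Ico]
  rw [← Finset.sum_subset (Finset.Ico_subset_Ico (Nat.zero_le i) le_rfl)
    (fun u _ hu => by
      have : u < i := by
        rw [Finset.mem_Ico] at *
        omega
      rw [Nat.choose_eq_zero_of_lt this, mul_zero])]
  rw [Finset.sum_Ico_eq_sum_range]
  have hterm : ∀ v, r.choose (i + v + 1) * (N - 1).choose (i + v) * (i + v).choose i
      = (N - 1).choose i * (r.choose (i + 1 + v) * (s - 1).choose v) := by
    intro v
    have h1 : (N - 1).choose (i + v) * (i + v).choose i
        = (N - 1).choose i * (s - 1).choose v := by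
      have := myChooseMul s i v hs
      rwa [← hNdef] at this
    calc r.choose (i + v + 1) * (N - 1).choose (i + v) * (i + v).choose i
        = r.choose (i + 1 + v) * ((N - 1).choose (i + v) * (i + v).choose i) := by ring_nf
      _ = r.choose (i + 1 + v) * ((N - 1).choose i * (s - 1).choose v) := by rw [h1]
      _ = (N - 1).choose i * (r.choose (i + 1 + v) * (s - 1).choose v) := by ring
  rw [Finset.sum_congr rfl (fun v _ => hterm v), ← Finset.mul_sum,
    myVandermonde r s i hr hs hi]
  rw [← hNdef]
  ring
end

section
/- Let d_1 ≤ d_2 ≤ ... ≤ d_r be positive real numbers (or positive integers), let s ≥ 1, and for i = 1,...,r set m_i = s·d_1 + d_2 + ... + d_i. Then (∏_{i=1}^r m_i)/r! ≤ C(s+r-1, r)·d_1·d_2···d_r, where C(s+r-1,r) is the binomial coefficient. -/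
lemma prod_Icc_ascFactorial (s r : ℕ) :
    ∏ i ∈ Finset.Icc 1 r, (s + i - 1) = s.ascFactorial r := by
  induction r with
  | zero => simp
  | succ n ih =>
    rw [Finset.prod_Icc_succ_top (Nat.le_add_left 1 n), ih,
      show s + (n + 1) - 1 = s + n from by omega, Nat.ascFactorial_succ, Nat.mul_comm]

theorem stmt4 (r s : ℕ) (hr : 1 ≤ r) (hs : 1 ≤ s) (d : ℕ → ℝ)
    (hpos : ∀ i, 1 ≤ i → i ≤ r → 0 < d i)
    (hmono : ∀ i j, 1 ≤ i → i ≤ j → j ≤ r → d i ≤ d j) :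
    (∏ i ∈ Finset.Icc 1 r, ((s : ℝ) * d 1 + ∑ j ∈ Finset.Icc 2 i, d j)) / (r.factorial : ℝ)
      ≤ ((s + r - 1).choose r : ℝ) * ∏ i ∈ Finset.Icc 1 r, d i := by
  have hstep : ∏ i ∈ Finset.Icc 1 r, ((s : ℝ) * d 1 + ∑ j ∈ Finset.Icc 2 i, d j)
      ≤ ∏ i ∈ Finset.Icc 1 r, (((s + i - 1 : ℕ) : ℝ) * d i) := by
    apply Finset.prod_le_prod
    · intro i hi
      simp only [Finset.mem_Icc] at hi
      have h1 : (0 : ℝ) ≤ (s : ℝ) * d 1 :=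
        mul_nonneg (Nat.cast_nonneg s) (hpos 1 le_rfl (le_trans hi.1 hi.2)).le
      have h2 : (0 : ℝ) ≤ ∑ j ∈ Finset.Icc 2 i, d j := by
        apply Finset.sum_nonneg
        intro j hj
        simp only [Finset.mem_Icc] at hj
        exact (hpos j (le_trans one_le_two hj.1) (le_trans hj.2 hi.2)).le
      linarith
    · intro i hi
      simp only [Finset.mem_Icc] at hi
      obtain ⟨hi1, hi2⟩ := hi
      have hd1 : d 1 ≤ d i := hmono 1 i le_rfl hi1 hi2
      have hsum : ∑ j ∈ Finset.Icc 2 i, d j ≤ ∑ j ∈ Finset.Icc 2 i, d i := by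
        apply Finset.sum_le_sum
        intro j hj
        simp only [Finset.mem_Icc] at hj
        exact hmono j i (le_trans one_le_two hj.1) hj.2 hi2
      have hcard : (Finset.Icc 2 i).card = i - 1 := by
        rw [Nat.card_Icc]; omega
      have : ∑ j ∈ Finset.Icc 2 i, d i = ((i - 1 : ℕ) : ℝ) * d i := by
        rw [Finset.sum_const, hcard, nsmul_eq_mul]
      calc (s : ℝ) * d 1 + ∑ j ∈ Finset.Icc 2 i, d j
          ≤ (s : ℝ) * d i + ((i - 1 : ℕ) : ℝ) * d i := by
            rw [← this]
            gcongr
        _ = ((s + i - 1 : ℕ) : ℝ) * d i := by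
            have h3 : (s + i - 1 : ℕ) = s + (i - 1) := by omega
            rw [h3, Nat.cast_add, add_mul]
  have hprod : ∏ i ∈ Finset.Icc 1 r, (((s + i - 1 : ℕ) : ℝ) * d i)
      = ((r.factorial : ℝ) * ((s + r - 1).choose r : ℝ)) * ∏ i ∈ Finset.Icc 1 r, d i := by
    rw [Finset.prod_mul_distrib, ← Nat.cast_prod, prod_Icc_ascFactorial,
      Nat.ascFactorial_eq_factorial_mul_choose', Nat.cast_mul]
  have hfact : (0 : ℝ) < (r.factorial : ℝ) := by positivity
  rw [div_le_iff₀ hfact]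
  calc (∏ i ∈ Finset.Icc 1 r, ((s : ℝ) * d 1 + ∑ j ∈ Finset.Icc 2 i, d j))
      ≤ ((r.factorial : ℝ) * ((s + r - 1).choose r : ℝ)) * ∏ i ∈ Finset.Icc 1 r, d i := by
        rw [← hprod]; exact hstep
    _ = ((s + r - 1).choose r : ℝ) * (∏ i ∈ Finset.Icc 1 r, d i) * (r.factorial : ℝ) := by ring
end

section
/- Let k be a field, R = k[x_0,...,x_n], and let F_1,...,F_r ∈ R be a homogeneous regular sequence with deg F_i = d_i. Set I = (F_1,...,F_r) and J = (F_2,...,F_r). Then for each positive integer s there is a short exact sequence of graded R-modules 0 → J^s(-d_1) → I^{s-1}(-d_1) ⊕ J^s → I^s → 0, where the first map sends x to (x, F_1·x) ∈ I^{s-1}(-d_1) ⊕ J^s (noting J^s ⊆ I^{s-1}), and the second sends (y, z) to F_1·y - z. -/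
open RingTheory.Sequence Ideal List Pointwise

lemma pow_sup_le_aux {A : Type*} [CommRing A] (K J : Ideal A) (s : ℕ) :
    (K ⊔ J)^(s+1) ≤ K * (K ⊔ J)^s ⊔ J^(s+1) := by
  induction s with
  | zero => simp
  | succ s ih =>
    rw [pow_succ]
    refine le_trans (Ideal.mul_mono_left ih) ?_
    rw [Ideal.sup_mul]
    apply sup_le
    · rw [mul_assoc, ← pow_succ]; exact le_sup_left
    · rw [Ideal.mul_sup]
      apply sup_le
      · refine le_sup_of_le_left ?_
        rw [mul_comm]
        exact Ideal.mul_mono_right (Ideal.pow_right_mono le_sup_right _)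
      · rw [← pow_succ]; exact le_sup_right

lemma subperm_weaklyRegular {A : Type*} [CommRing A] [IsNoetherianRing A] {l l' : List A}
    (h : IsWeaklyRegular A l) (hjac : ∀ x ∈ l, x ∈ Ideal.jacobson (⊥ : Ideal A))
    (hsub : l' <+~ l) : IsWeaklyRegular A l' := by
  obtain ⟨t, hperm, hsl⟩ := hsub
  obtain ⟨rest, hrest⟩ := hsl.exists_perm_append
  have hjac' : ∀ x ∈ l, x ∈ Ideal.jacobson (Module.annihilator A A) :=
    fun x hx => Ideal.jacobson_mono bot_le (hjac x hx)
  have h2 : IsWeaklyRegular A (t ++ rest) :=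
    h.of_perm_of_subset_jacobson_annihilator hrest hjac'
  have h3 : IsWeaklyRegular A t := ((isWeaklyRegular_append_iff A t rest).mp h2).1
  exact h3.of_perm_of_subset_jacobson_annihilator hperm
    (fun x hx => hjac' x (hrest.symm.subset (List.mem_append_left _ hx)))

lemma mem_jacobson_bot_quot {A : Type*} [CommRing A] (P : Ideal A) {x : A}
    (hx : x ∈ Ideal.jacobson (⊥ : Ideal A)) :
    Ideal.Quotient.mk P x ∈ Ideal.jacobson (⊥ : Ideal (A ⧸ P)) := by
  rw [Ideal.mem_jacobson_bot] at hx ⊢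
  intro y
  obtain ⟨y, rfl⟩ := Ideal.Quotient.mk_surjective y
  have := hx y
  have : IsUnit (Ideal.Quotient.mk P (x * y + 1)) := this.map _
  simpa using this

lemma smul_top_eq_span {A : Type*} [CommRing A] (f : A) :
    (f • (⊤ : Submodule A A)) = (Ideal.span {f} : Ideal A) := by
  rw [← Submodule.ideal_span_singleton_smul, smul_eq_mul, mul_top]

lemma quot_transfer {A : Type*} [CommRing A] {f : A} (l : List A)
    (h : IsWeaklyRegular A (f :: l)) :
    IsWeaklyRegular (A ⧸ Ideal.span {f}) (l.map (Ideal.Quotient.mk (Ideal.span {f}))) := by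
  have h2 := ((isWeaklyRegular_cons_iff' A f l).mp h).2
  let e : QuotSMulTop f A ≃+ (A ⧸ Ideal.span {f}) :=
    (Submodule.quotEquivOfEq _ _ (smul_top_eq_span f)).toAddEquiv
  refine (AddEquiv.isWeaklyRegular_congr (e := e) ?_).mp h2
  rw [List.forall₂_same]
  intro a _ x
  obtain ⟨r, rfl⟩ := Ideal.Quotient.mk_surjective a
  obtain ⟨m, rfl⟩ := Submodule.Quotient.mk_surjective _ x
  rfl

universe u

lemma master (s : ℕ) : ∀ (nn : ℕ) (A : Type u) [CommRing A] [IsNoetherianRing A]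
    (l : List A) (g0 : A), l.length ≤ nn →
    IsWeaklyRegular A (g0 :: l) →
    (∀ x ∈ g0 :: l, x ∈ Ideal.jacobson (⊥ : Ideal A)) →
    ∀ y : A, g0 * y ∈ (Ideal.ofList l)^s → y ∈ (Ideal.ofList l)^s := by
  induction s using Nat.strong_induction_on with
  | _ s IHs =>
  intro nn
  induction nn with
  | zero =>
    intro A _ _ l g0 hlen hreg hjac y hy
    have hl : l = [] := List.eq_nil_of_length_eq_zero (Nat.le_zero.mp hlen)
    subst hl
    cases s with
    | zero => simpa [Ideal.one_eq_top] using Submodule.mem_top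
    | succ s0 =>
      rw [Ideal.ofList_nil, ← Ideal.zero_eq_bot, zero_pow (Nat.succ_ne_zero s0)] at hy ⊢
      have hg0 : IsSMulRegular A g0 := ((isWeaklyRegular_cons_iff A g0 []).mp hreg).1
      have h1 : g0 * y = g0 * 0 := by simpa using hy
      have h2 : y = 0 := hg0 (by simpa [smul_eq_mul] using h1)
      simp [h2]
  | succ nn IHn =>
    intro A _ _ l g0 hlen hreg hjac y hy
    cases l with
    | nil => exact IHn A [] g0 (by simp) hreg hjac y hy
    | cons f l' =>
      cases s with
      | zero => simpa [Ideal.one_eq_top] using Submodule.mem_top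
      | succ s0 =>
      have hlen' : l'.length ≤ nn := by simpa using hlen
      have hjac' : ∀ x ∈ f :: l', x ∈ Ideal.jacobson (⊥ : Ideal A) :=
        fun x hx => hjac x (List.mem_cons_of_mem _ hx)
      have hsubreg : ∀ l₂, l₂ <+~ (g0 :: f :: l') → IsWeaklyRegular A l₂ :=
        fun l₂ h => subperm_weaklyRegular hreg hjac h
      have hregf : IsWeaklyRegular A (f :: l') :=
        hsubreg _ ((List.sublist_cons_self g0 (f :: l')).subperm)
      -- E : division by f
      have hE : ∀ w : A, f * w ∈ (Ideal.ofList (f :: l'))^(s0+1) →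
          w ∈ (Ideal.ofList (f :: l'))^s0 := by
        intro w hw
        rw [Ideal.ofList_cons] at hw ⊢
        have hw2 := pow_sup_le_aux (Ideal.span {f}) (Ideal.ofList l') s0 hw
        obtain ⟨a, ha, b, hb, hab⟩ := Submodule.mem_sup.mp hw2
        obtain ⟨w', hw', hfw'⟩ := Ideal.mem_span_singleton_mul.mp ha
        have hb' : f * (w - w') ∈ (Ideal.ofList l')^(s0+1) := by
          have : f * (w - w') = b := by rw [mul_sub, hfw', ← hab]; ring
          rw [this]; exact hb
        have hww' : w - w' ∈ (Ideal.ofList l')^(s0+1) :=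
          IHn A l' f hlen' hregf (fun x hx => hjac' x hx) (w - w') hb'
        have : w - w' ∈ (Ideal.span {f} ⊔ Ideal.ofList l')^s0 :=
          Ideal.pow_le_pow_right (Nat.le_succ s0)
            (Ideal.pow_right_mono le_sup_right (s0+1) hww')
        simpa using add_mem hw' this
      -- step 1 : y ∈ J^s0
      have hy0 : y ∈ (Ideal.ofList (f :: l'))^s0 :=
        IHs s0 (Nat.lt_succ_self s0) (nn+1) A (f :: l') g0 hlen hreg hjac y
          (Ideal.pow_le_pow_right (Nat.le_succ s0) hy)
      -- step 2 : quotient by f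
      set mkf := Ideal.Quotient.mk (Ideal.span {f}) with hmkf
      have hregB : IsWeaklyRegular (A ⧸ Ideal.span {f}) ((g0 :: l').map mkf) :=
        quot_transfer _ (hsubreg (f :: g0 :: l') (List.Perm.swap g0 f l').subperm)
      have hjacB : ∀ x ∈ (g0 :: l').map mkf,
          x ∈ Ideal.jacobson (⊥ : Ideal (A ⧸ Ideal.span {f})) := by
        intro x hx
        obtain ⟨x0, hx0, rfl⟩ := List.mem_map.mp hx
        refine mem_jacobson_bot_quot _ (hjac x0 ?_)
        rcases List.mem_cons.mp hx0 with h | h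
        · simp [h]
        · exact List.mem_cons_of_mem _ (List.mem_cons_of_mem _ h)
      have hmapJ : Ideal.map mkf (Ideal.ofList (f :: l')) = Ideal.map mkf (Ideal.ofList l') := by
        rw [Ideal.ofList_cons, Ideal.map_sup]
        have : Ideal.map mkf (Ideal.span {f}) = ⊥ := by
          rw [Ideal.map_span, Set.image_singleton]
          have : mkf f = 0 := Ideal.Quotient.eq_zero_iff_mem.mpr
            (Ideal.subset_span rfl)
          rw [this]
          exact Ideal.span_singleton_eq_bot.mpr rfl
        rw [this, bot_sup_eq]
      have hmem : mkf g0 * mkf y ∈ (Ideal.ofList (l'.map mkf))^(s0+1) := by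
        rw [← Ideal.map_ofList, ← hmapJ, ← Ideal.map_pow, ← _root_.map_mul]
        exact Ideal.mem_map_of_mem mkf hy
      have hmy := IHn (A ⧸ Ideal.span {f}) (l'.map mkf) (mkf g0)
        (by simpa using hlen') hregB hjacB (mkf y) hmem
      rw [← Ideal.map_ofList, ← Ideal.map_pow] at hmy
      obtain ⟨x, hxJ, hxy⟩ :=
        Ideal.mem_image_of_mem_map_of_surjective mkf Ideal.Quotient.mk_surjective hmy
      have hsub : x - y ∈ Ideal.span {f} := Ideal.Quotient.eq.mp hxy
      obtain ⟨z, hz⟩ := Ideal.mem_span_singleton'.mp hsub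
      -- hz : z * f = x - y  (check form below)
      have hJ'le : (Ideal.ofList l')^(s0+1) ≤ (Ideal.ofList (f :: l'))^(s0+1) :=
        Ideal.pow_right_mono (by rw [Ideal.ofList_cons]; exact le_sup_right) _
      have hxJ1 : x ∈ (Ideal.ofList (f :: l'))^(s0+1) := hJ'le hxJ
      have h4 : g0 * (f * (-z)) ∈ (Ideal.ofList (f :: l'))^(s0+1) := by
        have heq : g0 * (f * (-z)) = g0 * y - g0 * x := by linear_combination (-g0) * hz
        rw [heq]
        exact sub_mem hy (Ideal.mul_mem_left _ _ hxJ1)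
      have h5 : g0 * (-z) ∈ (Ideal.ofList (f :: l'))^s0 := by
        refine hE _ ?_
        rw [show f * (g0 * (-z)) = g0 * (f * (-z)) by ring]
        exact h4
      have h6 : (-z) ∈ (Ideal.ofList (f :: l'))^s0 :=
        IHs s0 (Nat.lt_succ_self s0) (nn+1) A (f :: l') g0 hlen hreg hjac (-z) h5
      have hfJ : f ∈ Ideal.ofList (f :: l') := by
        rw [Ideal.ofList_cons]
        exact Submodule.mem_sup_left (Ideal.mem_span_singleton_self f)
      have hfz : f * (-z) ∈ (Ideal.ofList (f :: l'))^(s0+1) := by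
        rw [pow_succ']
        exact Ideal.mul_mem_mul hfJ h6
      have hyeq : y = x + f * (-z) := by linear_combination hz
      rw [hyeq]
      exact add_mem hxJ1 hfz

open MvPolynomial in
lemma homog_sat {k : Type*} [Field k] {σ : Type*} {P : Ideal (MvPolynomial σ k)}
    (hP : ∀ (d : ℕ) (p : MvPolynomial σ k), p ∈ P → homogeneousComponent d p ∈ P)
    {u : MvPolynomial σ k} (hu : constantCoeff u ≠ 0) :
    ∀ (N : ℕ) (y : MvPolynomial σ k), y.support.card ≤ N → u * y ∈ P → y ∈ P := by
  intro N
  induction N with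
  | zero =>
    intro y hy _
    have : y = 0 := by
      rw [← MvPolynomial.support_eq_empty, ← Finset.card_eq_zero]
      omega
    simp [this]
  | succ N IH =>
    intro y hy hmem
    classical
    by_cases h0 : y = 0
    · simp [h0]
    have hne : (y.support.image Finsupp.degree).Nonempty :=
      Finset.image_nonempty.mpr (MvPolynomial.support_nonempty.mpr h0)
    set d0 := (y.support.image Finsupp.degree).min' hne with hd0
    set y0 := homogeneousComponent d0 y with hy0def
    set c := constantCoeff u with hc
    -- homogeneous component of u*y in degree d0
    have hcompmem : homogeneousComponent d0 (u * y) ∈ P := hP _ _ hmem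
    have hkey : homogeneousComponent d0 (u * y) = C c * y0 := by
      have hsplit : u * y = C c * y + (u - C c) * y := by ring
      have hz : homogeneousComponent d0 ((u - C c) * y) = 0 := by
        apply homogeneousComponent_eq_zero'
        intro d hd
        have hsub := MvPolynomial.support_mul _ _ hd
        obtain ⟨a, ha, b, hb, rfl⟩ := Finset.mem_add.mp hsub
        have ha0 : a ≠ 0 := by
          intro h
          apply MvPolynomial.mem_support_iff.mp ha
          rw [h]
          show MvPolynomial.constantCoeff (u - C c) = 0
          simp [hc]
        have hadeg : 1 ≤ a.degree := Nat.one_le_iff_ne_zero.mpr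
          (fun h => ha0 ((Finsupp.degree_eq_zero_iff a).mp h))
        have hbdeg : d0 ≤ b.degree :=
          Finset.min'_le _ _ (Finset.mem_image_of_mem _ hb)
        have : (a + b).degree = a.degree + b.degree := by
          simp only [Finsupp.degree_eq_weight_one, map_add]
        omega
      rw [hsplit, map_add, homogeneousComponent_C_mul, hz, add_zero]
    have hy0P : y0 ∈ P := by
      have h1 : C c * y0 ∈ P := hkey ▸ hcompmem
      have h2 : C c⁻¹ * (C c * y0) = y0 := by
        rw [← mul_assoc, ← C_mul, inv_mul_cancel₀ hu, C_1, one_mul]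
      exact h2 ▸ P.mul_mem_left _ h1
    -- the witness monomial
    obtain ⟨w, hw, hwdeg⟩ := Finset.mem_image.mp (Finset.min'_mem _ hne)
    have hcoeffy0 : ∀ d, MvPolynomial.coeff d y0 =
        if Finsupp.degree d = d0 then MvPolynomial.coeff d y else 0 := by
      intro d; rw [hy0def, coeff_homogeneousComponent]
    have hwy' : (y - y0).support ⊆ y.support.erase w := by
      intro d hd
      have hcd : MvPolynomial.coeff d (y - y0) ≠ 0 := MvPolynomial.mem_support_iff.mp hd
      rw [MvPolynomial.coeff_sub, hcoeffy0 d] at hcd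
      by_cases hdd : Finsupp.degree d = d0
      · simp [hdd] at hcd
      · rw [if_neg hdd, sub_zero] at hcd
        exact Finset.mem_erase.mpr ⟨fun h => hdd (by rw [h, hwdeg]), MvPolynomial.mem_support_iff.mpr hcd⟩
    have hcard : (y - y0).support.card ≤ N := by
      have := Finset.card_le_card hwy'
      have h2 := Finset.card_erase_of_mem hw
      omega
    have hy' : y - y0 ∈ P := by
      refine IH (y - y0) hcard ?_
      have : u * (y - y0) = u * y - u * y0 := by ring
      rw [this]
      exact sub_mem hmem (P.mul_mem_left _ hy0P)
    have : y = (y - y0) + y0 := by ring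
    rw [this]
    exact add_mem hy' hy0P

attribute [local instance] MvPolynomial.gradedAlgebra

open MvPolynomial in
lemma decompose_coe_eq {k : Type*} [Field k] {σ : Type*} (p : MvPolynomial σ k) (d : ℕ) :
    ((DirectSum.decompose (homogeneousSubmodule σ k) p d : MvPolynomial σ k)) =
      homogeneousComponent d p := by
  rw [← decomposition.decompose'_apply]
  rfl

open MvPolynomial in
lemma isHomog_pow {k : Type*} [Field k] {σ : Type*} {P : Ideal (MvPolynomial σ k)}
    (h : Ideal.IsHomogeneous (homogeneousSubmodule σ k) P) (s : ℕ) :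
    Ideal.IsHomogeneous (homogeneousSubmodule σ k) (P ^ s) := by
  induction s with
  | zero => simpa [Ideal.one_eq_top] using Ideal.IsHomogeneous.top _
  | succ s ih => rw [pow_succ]; exact Ideal.IsHomogeneous.mul ih h

set_option maxHeartbeats 1000000 in
set_option synthInstance.maxHeartbeats 400000 in
open MvPolynomial TensorProduct in
theorem keyDiv {k : Type*} [Field k] {n r : ℕ}
    (F : Fin (r + 1) → MvPolynomial (Fin (n + 1)) k) (d : Fin (r + 1) → ℕ)
    (hhom : ∀ i, (F i).IsHomogeneous (d i))
    (hreg : RingTheory.Sequence.IsRegular (MvPolynomial (Fin (n + 1)) k) (List.ofFn F))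
    (J : Ideal (MvPolynomial (Fin (n + 1)) k))
    (hJ : J = Ideal.span (Set.range fun i : Fin r => F i.succ))
    (s : ℕ) : ∀ y, F 0 * y ∈ J ^ s → y ∈ J ^ s := by
  intro y hy
  have htop : Ideal.ofList (List.ofFn F) ≠ ⊤ := by
    intro h
    refine hreg.top_ne_smul ?_
    rw [h, Submodule.top_smul]
  have hFm : ∀ i, MvPolynomial.constantCoeff (F i) = 0 := by
    intro i
    by_contra hc
    have hd0 : d i = 0 := by
      have := hhom i (show MvPolynomial.coeff 0 (F i) ≠ 0 from hc)
      simpa using this.symm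
    have hFC : F i = C (MvPolynomial.coeff 0 (F i)) := by
      have h1 : F i ∈ homogeneousSubmodule (Fin (n+1)) k 0 :=
        (mem_homogeneousSubmodule _ _).mpr (hd0 ▸ hhom i)
      have h2 := homogeneousComponent_of_mem (m := 0) h1
      rw [if_pos rfl] at h2
      conv_lhs => rw [← h2]
      rw [homogeneousComponent_zero]
    have hunit : IsUnit (F i) := by
      rw [hFC]
      exact IsUnit.map C (isUnit_iff_ne_zero.mpr hc)
    refine htop (Ideal.eq_top_of_isUnit_mem _ ?_ hunit)
    exact Ideal.subset_span (List.mem_ofFn.mpr ⟨i, rfl⟩)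
  let R := MvPolynomial (Fin (n + 1)) k
  let m : Ideal R := RingHom.ker (MvPolynomial.constantCoeff : R →+* k)
  haveI hmmax : m.IsMaximal :=
    RingHom.ker_isMaximal_of_surjective _ (fun a => ⟨C a, constantCoeff_C _ a⟩)
  haveI : m.IsPrime := hmmax.isPrime
  let A := Localization.AtPrime m
  haveI : IsNoetherianRing A :=
    IsLocalization.isNoetherianRing m.primeCompl A inferInstance
  have hwr1 : IsWeaklyRegular (A ⊗[R] R) (List.ofFn F) :=
    hreg.toIsWeaklyRegular.isWeaklyRegular_lTensor
  have hwr2 : IsWeaklyRegular A (List.ofFn F) :=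
    ((TensorProduct.rid R A).isWeaklyRegular_congr (List.ofFn F)).mp hwr1
  have hwr3 : IsWeaklyRegular A ((List.ofFn F).map (algebraMap R A)) :=
    (isWeaklyRegular_map_algebraMap_iff (R := R) (S := A) (M := A) (List.ofFn F)).mpr hwr2
  have hjacA : ∀ x ∈ (List.ofFn F).map (algebraMap R A),
      x ∈ Ideal.jacobson (⊥ : Ideal A) := by
    intro x hx
    obtain ⟨x0, hx0, rfl⟩ := List.mem_map.mp hx
    obtain ⟨i, rfl⟩ := List.mem_ofFn.mp hx0
    refine IsLocalRing.maximalIdeal_le_jacobson _ ?_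
    rw [← Localization.AtPrime.map_eq_maximalIdeal]
    exact Ideal.mem_map_of_mem _ (by rw [RingHom.mem_ker]; exact hFm i)
  have hlist : List.ofFn F = F 0 :: List.ofFn (fun i : Fin r => F i.succ) :=
    List.ofFn_succ
  have hJ' : J = Ideal.ofList (List.ofFn (fun i : Fin r => F i.succ)) := by
    rw [hJ]
    congr 1
    ext x
    simp [List.mem_ofFn, eq_comm, Set.mem_range]
  -- apply the master lemma in A
  have hmemA : algebraMap R A (F 0) * algebraMap R A y ∈
      (Ideal.ofList ((List.ofFn (fun i : Fin r => F i.succ)).map (algebraMap R A))) ^ s := by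
    rw [← map_ofList, ← Ideal.map_pow, ← _root_.map_mul]
    exact Ideal.mem_map_of_mem _ (hJ' ▸ hy)
  have hregA : IsWeaklyRegular A (algebraMap R A (F 0) ::
      (List.ofFn (fun i : Fin r => F i.succ)).map (algebraMap R A)) := by
    rw [← List.map_cons, ← hlist]
    exact hwr3
  have hjacA' : ∀ x ∈ (algebraMap R A (F 0) ::
      (List.ofFn (fun i : Fin r => F i.succ)).map (algebraMap R A)),
      x ∈ Ideal.jacobson (⊥ : Ideal A) := by
    rw [← List.map_cons, ← hlist]
    exact hjacA
  have hyA := master s r A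
    ((List.ofFn (fun i : Fin r => F i.succ)).map (algebraMap R A))
    (algebraMap R A (F 0)) (by simp) hregA hjacA' (algebraMap R A y) hmemA
  rw [← map_ofList, ← Ideal.map_pow, ← hJ'] at hyA
  -- pull back to R
  obtain ⟨⟨⟨x, hx⟩, u⟩, hequ⟩ :=
    (IsLocalization.mem_map_algebraMap_iff m.primeCompl A).mp hyA
  have heq2 : algebraMap R A (y * u) = algebraMap R A x := by
    rw [_root_.map_mul]; exact hequ
  obtain ⟨v, hv⟩ := (IsLocalization.eq_iff_exists m.primeCompl A).mp heq2
  have hmem2 : ((v : R) * (u : R)) * y ∈ J ^ s := by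
    have : ((v : R) * (u : R)) * y = (v : R) * x := by
      rw [show ((v:R) * (u:R)) * y = (v:R) * (y * (u:R)) by ring, hv]
    rw [this]
    exact Ideal.mul_mem_left _ _ hx
  have hcc : MvPolynomial.constantCoeff ((v : R) * (u : R)) ≠ 0 := by
    have : ((v : R) * (u : R)) ∈ m.primeCompl := Submonoid.mul_mem _ v.2 u.2
    simpa [m, Ideal.primeCompl, RingHom.mem_ker] using this
  -- J^s is homogeneous
  have hJhom : Ideal.IsHomogeneous (homogeneousSubmodule (Fin (n+1)) k) (J ^ s) := by
    refine isHomog_pow ?_ s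
    rw [hJ]
    refine Ideal.homogeneous_span _ _ ?_
    rintro x ⟨i, rfl⟩
    exact ⟨d i.succ, (mem_homogeneousSubmodule _ _).mpr (hhom i.succ)⟩
  have hP : ∀ (dd : ℕ) (p : R), p ∈ J ^ s → homogeneousComponent dd p ∈ J ^ s := by
    intro dd p hp
    have := hJhom dd hp
    rwa [decompose_coe_eq] at this
  exact homog_sat hP hcc _ y le_rfl hmem2



theorem stmt10 {k : Type*} [Field k] {n r : ℕ}
    (F : Fin (r + 1) → MvPolynomial (Fin (n + 1)) k) (d : Fin (r + 1) → ℕ)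
    (hhom : ∀ i, (F i).IsHomogeneous (d i))
    (hreg : RingTheory.Sequence.IsRegular (MvPolynomial (Fin (n + 1)) k) (List.ofFn F))
    (I J : Ideal (MvPolynomial (Fin (n + 1)) k))
    (hI : I = Ideal.span (Set.range F))
    (hJ : J = Ideal.span (Set.range fun i : Fin r => F i.succ))
    (s : ℕ) (hs : 1 ≤ s) :
    -- J^s ⊆ I^{s-1}, so the map x ↦ (x, F₁ x) lands in I^{s-1}(-d₁) ⊕ J^s
    (J ^ s ≤ I ^ (s - 1)) ∧
    -- injectivity of the first map x ↦ (x, F₁ x) (trivial)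
    (∀ x ∈ J ^ s, ∀ x' ∈ J ^ s, x = x' ∧ F 0 * x = F 0 * x' → x = x') ∧
    -- exactness at the middle: ker((y,z) ↦ F₁ y - z) = im(x ↦ (x, F₁ x))
    (∀ y ∈ I ^ (s - 1), ∀ z ∈ J ^ s,
        F 0 * y - z = 0 ↔ ∃ x ∈ J ^ s, y = x ∧ z = F 0 * x) ∧
    -- the second map lands in I^s and is surjective onto I^s
    (∀ y ∈ I ^ (s - 1), ∀ z ∈ J ^ s, F 0 * y - z ∈ I ^ s) ∧
    (∀ w ∈ I ^ s, ∃ y ∈ I ^ (s - 1), ∃ z ∈ J ^ s, w = F 0 * y - z) := by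
  obtain ⟨t, rfl⟩ : ∃ t, s = t + 1 := ⟨s - 1, by omega⟩
  simp only [Nat.add_sub_cancel]
  have hIJ : I = Ideal.span {F 0} ⊔ J := by
    rw [hI, hJ, Fin.range_fin_succ, Set.insert_eq, Ideal.span_union]
    rfl
  have hJI : J ≤ I := by rw [hIJ]; exact le_sup_right
  have hF0I : F 0 ∈ I := by
    rw [hIJ]
    exact Submodule.mem_sup_left (Ideal.mem_span_singleton_self _)
  have hkey := keyDiv F d hhom hreg J hJ (t + 1)
  refine ⟨?_, ?_, ?_, ?_, ?_⟩
  · exact le_trans (Ideal.pow_right_mono hJI _) (Ideal.pow_le_pow_right (Nat.le_succ t))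
  · exact fun x _ x' _ h => h.1
  · intro y hyI z hz
    constructor
    · intro h0
      have he : F 0 * y = z := sub_eq_zero.mp h0
      exact ⟨y, hkey y (he ▸ hz), rfl, he.symm⟩
    · rintro ⟨x, hx, rfl, rfl⟩
      exact sub_self _
  · intro y hy z hz
    refine sub_mem ?_ (Ideal.pow_right_mono hJI _ hz)
    rw [pow_succ']
    exact Ideal.mul_mem_mul hF0I hy
  · intro w hw
    have hw2 : w ∈ (Ideal.span {F 0} ⊔ J) ^ (t + 1) := by rwa [← hIJ]
    have := pow_sup_le_aux (Ideal.span {F 0}) J t hw2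
    obtain ⟨a, ha, b, hb, hab⟩ := Submodule.mem_sup.mp this
    obtain ⟨y, hy, hfy⟩ := Ideal.mem_span_singleton_mul.mp ha
    refine ⟨y, ?_, -b, neg_mem hb, ?_⟩
    · rw [hIJ]; exact hy
    · rw [← hab, ← hfy]; ring
end

section
/- Let k be a field and R = k[x_0,...,x_n]. Let I = (F_1,...,F_r) be generated by a homogeneous regular sequence with deg F_i = d_i and d_1 ≤ ... ≤ d_r. Then the least degree of a nonzero homogeneous element of I^s is s·d_1, i.e., α(I^s) = s·d_1, where α(J) = min{ i : J_i ≠ 0 }. -/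
open MvPolynomial

/-- The ideal of polynomials all of whose monomials have degree ≥ t. -/
noncomputable def lowCutIdeal (σ : Type*) (k : Type*) [DecidableEq σ] [CommSemiring k] (t : ℕ) :
    Ideal (MvPolynomial σ k) where
  carrier := {f | ∀ u : σ →₀ ℕ, u.degree < t → MvPolynomial.coeff u f = 0}
  add_mem' := by
    intro f g hf hg u hu
    simp [MvPolynomial.coeff_add, hf u hu, hg u hu]
  zero_mem' := by intro u hu; simp
  smul_mem' := by
    intro g f hf u hu
    rw [smul_eq_mul, MvPolynomial.coeff_mul]
    apply Finset.sum_eq_zero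
    rintro ⟨a, b⟩ hab
    rw [Finset.HasAntidiagonal.mem_antidiagonal] at hab
    have hb : b.degree < t := by
      have : a.degree + b.degree = u.degree := by
        rw [← hab]; simp [Finsupp.degree_eq_weight_one, map_add]
      omega
    simp [hf b hb]

lemma mem_lowCutIdeal_iff {σ k : Type*} [DecidableEq σ] [CommSemiring k] {t : ℕ} {f : MvPolynomial σ k} :
    f ∈ lowCutIdeal σ k t ↔ ∀ u : σ →₀ ℕ, u.degree < t → MvPolynomial.coeff u f = 0 :=
  Iff.rfl

lemma lowCutIdeal_mul {σ k : Type*} [DecidableEq σ] [CommSemiring k] {a b : ℕ}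
    {f g : MvPolynomial σ k} (hf : f ∈ lowCutIdeal σ k a) (hg : g ∈ lowCutIdeal σ k b) :
    f * g ∈ lowCutIdeal σ k (a + b) := by
  intro u hu
  rw [MvPolynomial.coeff_mul]
  apply Finset.sum_eq_zero
  rintro ⟨p, q⟩ hpq
  rw [Finset.HasAntidiagonal.mem_antidiagonal] at hpq
  have hsum : p.degree + q.degree = u.degree := by
    rw [← hpq]; simp [Finsupp.degree_eq_weight_one, map_add]
  by_cases hp : p.degree < a
  · simp [hf p hp]
  · have hq : q.degree < b := by omega
    simp [hg q hq]

theorem stmt12 {k : Type*} [Field k] {n r : ℕ} (hr : 0 < r)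
    (F : Fin r → MvPolynomial (Fin (n + 1)) k) (d : Fin r → ℕ)
    (hhom : ∀ j, (F j).IsHomogeneous (d j)) (hmono : Monotone d)
    (hreg : RingTheory.Sequence.IsRegular (MvPolynomial (Fin (n + 1)) k) (List.ofFn F))
    (I : Ideal (MvPolynomial (Fin (n + 1)) k)) (hI : I = Ideal.span (Set.range F))
    (s : ℕ) (hs : 1 ≤ s) :
    IsLeast {i : ℕ | ∃ f ∈ I ^ s, f ≠ 0 ∧ MvPolynomial.IsHomogeneous f i}
      (s * d ⟨0, hr⟩) := by
  set i0 : Fin r := ⟨0, hr⟩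
  -- F i0 ≠ 0 from regularity
  have hF0 : F i0 ≠ 0 := by
    intro h0
    have hlen : 0 < (List.ofFn F).length := by simp [hr]
    have hreg0 := hreg.toIsWeaklyRegular.regular_mod_prev 0 hlen
    have hget : (List.ofFn F)[0] = F i0 := by
      simp [List.getElem_ofFn, i0]
    rw [hget, h0] at hreg0
    have := hreg0 (a₁ := Submodule.Quotient.mk 1) (a₂ := Submodule.Quotient.mk 0)
      (by simp only [← Submodule.Quotient.mk_smul, zero_smul])
    rw [Submodule.Quotient.eq] at this
    have h1 : (1 : MvPolynomial (Fin (n + 1)) k) ∈ (Ideal.ofList ((List.ofFn F).take 0) • ⊤ : Submodule (MvPolynomial (Fin (n + 1)) k) (MvPolynomial (Fin (n + 1)) k)) := by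
      simpa using this
    rw [List.take_zero, Ideal.ofList_nil, Submodule.bot_smul, Submodule.mem_bot] at h1
    exact one_ne_zero h1
  constructor
  · -- membership: F i0 ^ s works
    refine ⟨F i0 ^ s, ?_, pow_ne_zero s hF0, ?_⟩
    · exact Ideal.pow_mem_pow (by rw [hI]; exact Ideal.subset_span ⟨i0, rfl⟩) s
    · rw [mul_comm]; exact (hhom i0).pow s
  · -- lower bound
    rintro i ⟨f, hfI, hf0, hfhom⟩
    -- I ⊆ lowCutIdeal (d i0)
    have hIlow : I ≤ lowCutIdeal (Fin (n + 1)) k (d i0) := by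
      rw [hI, Ideal.span_le]
      rintro _ ⟨j, rfl⟩
      intro u hu
      apply (hhom j).coeff_eq_zero
      have : d i0 ≤ d j := hmono (by simp [i0, Fin.le_def])
      omega
    have hpow : ∀ m : ℕ, I ^ m ≤ lowCutIdeal (Fin (n + 1)) k (m * d i0) := by
      intro m
      induction m with
      | zero => intro f _; intro u hu; omega
      | succ m ih =>
          rw [pow_succ, Nat.succ_mul]
          refine Ideal.mul_le.mpr fun a ha b hb => ?_
          exact lowCutIdeal_mul (ih ha) (hIlow hb)
    have hflow := hpow s hfI
    obtain ⟨u, hu⟩ := MvPolynomial.exists_coeff_ne_zero hf0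
    have hdeg : u.degree = i := by
      rw [Finsupp.degree_eq_weight_one]; exact hfhom hu
    by_contra hlt
    push_neg at hlt
    exact hu (hflow u (by omega))
end
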